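/- Let g₀ be the Weibull density with shape parameter γ > 0, g₀(t) = γ t^{γ−1} e^{−t^γ}, with survival function Ḡ₀(t) = e^{−t^γ} and mean μ. Then the Fisher information for scale of the current-duration density f₂(x) = Ḡ₀(x)/μ equals γ. -/

import Mathlib

open MeasureTheory Set Real

lemma aux_rpow_mul (γ : ℝ) {x : ℝ} (hx : 0 < x) : x * x ^ (γ - 1) = x ^ γ := by
  have h := Real.rpow_add hx 1 (γ - 1)
  rw [Real.rpow_one] at h
  rw [← h]
  congr 1
  ring

lemma aux_int (γ s : ℝ) (hγ : 0 < γ) (hs : -1 < s) :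
    IntegrableOn (fun x : ℝ => x ^ s * Real.exp (-(x ^ γ))) (Ioi 0) := by
  have hint : IntegrableOn (fun y : ℝ => y ^ ((s + 1) / γ - 1) * Real.exp (-y)) (Ioi 0) := by
    have h := Real.GammaIntegral_convergent (s := (s + 1) / γ) (div_pos (by linarith) hγ)
    exact h.congr_fun (fun x _ => by ring) measurableSet_Ioi
  have h := (integrableOn_Ioi_comp_rpow_iff'
      (fun y : ℝ => y ^ ((s + 1) / γ - 1) * Real.exp (-y)) (ne_of_gt hγ)).mpr hint
  refine h.congr_fun (fun x hx => ?_) measurableSet_Ioi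
  have hx0 : (0 : ℝ) < x := hx
  have h1 : (x ^ γ) ^ ((s + 1) / γ - 1) = x ^ (s + 1 - γ) := by
    rw [← Real.rpow_mul hx0.le]
    congr 1
    field_simp
  dsimp only
  rw [smul_eq_mul, h1, ← mul_assoc, ← Real.rpow_add hx0]
  congr 2
  ring

/-- For the Weibull density with shape `γ > 0` and survival function `Ḡ₀(t) = e^(−t^γ)`,
the Fisher information for scale of the current-duration density `f₂(x) = Ḡ₀(x)/μ`
equals `γ`. -/
theorem stmt12 (γ : ℝ) (hγ : 0 < γ)
    (g₀ : ℝ → ℝ) (hg₀ : ∀ t > (0:ℝ), g₀ t = γ * t ^ (γ - 1) * Real.exp (-(t ^ γ)))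
    (μ : ℝ) (hμ : μ = ∫ t in Ioi (0:ℝ), t * g₀ t)
    (f₂ f₂' : ℝ → ℝ) (hf₂ : ∀ x, f₂ x = Real.exp (-(x ^ γ)) / μ)
    (hderiv : ∀ x ∈ Ioi (0:ℝ), HasDerivAt f₂ (f₂' x) x) :
    ∫ x in Ioi (0:ℝ), (1 + x * f₂' x / f₂ x) ^ 2 * f₂ x = γ := by
  have hγ' : (0:ℝ) < 1/γ := by positivity
  set A := Real.Gamma (1/γ + 1) with hA
  have hApos : 0 < A := Real.Gamma_pos_of_pos (by positivity)
  -- μ = A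
  have hμA : μ = A := by
    rw [hμ]
    rw [show (∫ t in Ioi (0:ℝ), t * g₀ t)
        = ∫ t in Ioi (0:ℝ), γ * (t ^ γ * Real.exp (-(t ^ γ))) from
      setIntegral_congr_fun measurableSet_Ioi (fun t ht => by
        have ht0 : (0:ℝ) < t := ht
        rw [hg₀ t ht0, show t * (γ * t ^ (γ-1) * Real.exp (-(t^γ)))
            = γ * ((t * t^(γ-1)) * Real.exp (-(t^γ))) by ring, aux_rpow_mul γ ht0])]
    rw [integral_const_mul, integral_rpow_mul_exp_neg_rpow hγ (by linarith)]
    rw [hA, show (γ+1)/γ = 1/γ + 1 by field_simp; ring]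
    field_simp
  have hμ0 : μ ≠ 0 := by rw [hμA]; exact ne_of_gt hApos
  have hf₂eq : f₂ = fun x => Real.exp (-(x ^ γ)) / μ := funext hf₂
  -- value of f₂'
  have hder : ∀ x ∈ Ioi (0:ℝ),
      f₂' x = Real.exp (-(x ^ γ)) * -(γ * x ^ (γ - 1)) / μ := by
    intro x hx
    have hx0 : (0:ℝ) < x := hx
    have h1 : HasDerivAt (fun x : ℝ => x ^ γ) (γ * x ^ (γ - 1)) x :=
      Real.hasDerivAt_rpow_const (Or.inl hx0.ne')
    have h2 : HasDerivAt (fun x : ℝ => Real.exp (-(x ^ γ)) / μ)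
        (Real.exp (-(x ^ γ)) * -(γ * x ^ (γ - 1)) / μ) x := (h1.neg.exp).div_const μ
    rw [← hf₂eq] at h2
    exact (hderiv x hx).unique h2
  -- pointwise rewriting of integrand
  have hpt : ∀ x ∈ Ioi (0:ℝ), (1 + x * f₂' x / f₂ x) ^ 2 * f₂ x
      = (1/μ) * (x ^ (0:ℝ) * Real.exp (-(x ^ γ)))
        + (-(2*γ)/μ) * (x ^ γ * Real.exp (-(x ^ γ)))
        + (γ^2/μ) * (x ^ (γ+γ) * Real.exp (-(x ^ γ))) := by
    intro x hx
    have hx0 : (0:ℝ) < x := hx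
    have hE : Real.exp (-(x ^ γ)) ≠ 0 := (Real.exp_pos _).ne'
    have hxg : x * x ^ (γ - 1) = x ^ γ := aux_rpow_mul γ hx0
    have hxgg : x ^ (γ+γ) = x ^ γ * x ^ γ := Real.rpow_add hx0 γ γ
    rw [hf₂ x, hder x hx, Real.rpow_zero, hxgg]
    have key : x * (Real.exp (-(x ^ γ)) * -(γ * x ^ (γ - 1)) / μ)
        / (Real.exp (-(x ^ γ)) / μ) = -(γ * x ^ γ) := by
      rw [← hxg]
      field_simp
    rw [key]
    field_simp
    ring
  rw [setIntegral_congr_fun measurableSet_Ioi hpt]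
  have i1 : IntegrableOn (fun x : ℝ => (1/μ) * (x ^ (0:ℝ) * Real.exp (-(x ^ γ)))) (Ioi 0) :=
    (aux_int γ 0 hγ (by norm_num)).const_mul _
  have i2 : IntegrableOn (fun x : ℝ => (-(2*γ)/μ) * (x ^ γ * Real.exp (-(x ^ γ)))) (Ioi 0) :=
    (aux_int γ γ hγ (by linarith)).const_mul _
  have i3 : IntegrableOn (fun x : ℝ => (γ^2/μ) * (x ^ (γ+γ) * Real.exp (-(x ^ γ)))) (Ioi 0) :=
    (aux_int γ (γ+γ) hγ (by linarith)).const_mul _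
  have e12 := integral_add (μ := Measure.restrict volume (Ioi 0)) i1 i2
  have e123 := integral_add (μ := Measure.restrict volume (Ioi 0)) (i1.add i2) i3
  simp only [Pi.add_apply] at e12 e123
  rw [e123, e12,
    integral_const_mul, integral_const_mul, integral_const_mul,
    integral_rpow_mul_exp_neg_rpow hγ (by norm_num : (-1:ℝ) < 0),
    integral_rpow_mul_exp_neg_rpow hγ (by linarith : (-1:ℝ) < γ),
    integral_rpow_mul_exp_neg_rpow hγ (by linarith : (-1:ℝ) < γ + γ)]
  have hg1 : Real.Gamma ((0+1)/γ) = γ * A := by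
    rw [hA, Real.Gamma_add_one (ne_of_gt hγ')]
    rw [show (0+1)/γ = 1/γ by norm_num]
    field_simp
  have hg2 : Real.Gamma ((γ+1)/γ) = A := by
    rw [hA, show (γ+1)/γ = 1/γ + 1 by field_simp; ring]
  have hg3 : Real.Gamma ((γ+γ+1)/γ) = (1/γ + 1) * A := by
    rw [hA, show (γ+γ+1)/γ = (1/γ + 1) + 1 by field_simp; ring,
      Real.Gamma_add_one (by positivity : (1/γ + 1) ≠ 0)]
  rw [hg1, hg2, hg3, hμA]
  field_simp
  ring
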